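/- Let p be a prime and P a 2-generated non-cyclic p-group of order p^n. Then the graph Δ(P), whose vertices are the elements of P outside the Frattini subgroup Φ(P), with distinct vertices adjacent iff they do not generate P, has exactly p+1 connected components, each of which is a complete graph on p^{n-2}(p-1) vertices. In particular Δ(P) has an isolated vertex if and only if P ≅ C₂ × C₂. -/

import Mathlib

/-- The complement of the generating graph of `P`, restricted to elements outside
the Frattini subgroup: distinct vertices are adjacent iff they do not generate `P`. -/
def deltaGraph (P : Type*) [Group P] : SimpleGraph {x : P // x ∉ frattini P} where
  Adj a b := a ≠ b ∧ Subgroup.closure {a.1, b.1} ≠ ⊤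
  symm := by
    constructor
    rintro a b ⟨hab, h⟩
    exact ⟨hab.symm, by rwa [Set.pair_comm]⟩
  loopless := by constructor; rintro a ⟨h, -⟩; exact h rfl


open Subgroup

private lemma subgroup_eq_of_le_of_card_le {G : Type*} [Group G] [Finite G] {H K : Subgroup G}
    (h : H ≤ K) (hc : Nat.card K ≤ Nat.card H) : H = K := by
  apply SetLike.coe_injective
  refine Set.eq_of_subset_of_ncard_le h ?_ (Set.toFinite _)
  rwa [← Nat.card_coe_set_eq, ← Nat.card_coe_set_eq]

private lemma coatom_normal {p : ℕ} {G : Type*} [Group G] [Finite G] [Fact p.Prime]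
    (hG : IsPGroup p G) {M : Subgroup G} (hM : IsCoatom M) : M.Normal := by
  have : Group.IsNilpotent G := hG.isNilpotent
  exact Subgroup.NormalizerCondition.normal_of_coatom M normalizerCondition_of_isNilpotent hM

private lemma coatom_card_quot {p : ℕ} {G : Type*} [Group G] [Finite G] [hp : Fact p.Prime]
    (hG : IsPGroup p G) {M : Subgroup G} (hM : IsCoatom M) :
    M.Normal ∧ Nat.card (G ⧸ M) = p := by
  have hnorm : M.Normal := coatom_normal hG hM
  refine ⟨hnorm, ?_⟩
  have hQ : IsPGroup p (G ⧸ M) := hG.to_quotient M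
  have hnt : Nontrivial (G ⧸ M) := by
    obtain ⟨x, hx⟩ : ∃ x, x ∉ M := by
      by_contra hcon
      push_neg at hcon
      exact hM.1 (Subgroup.eq_top_iff' M |>.mpr hcon)
    exact ⟨⟨(x : G ⧸ M), 1, by simpa [QuotientGroup.eq_one_iff] using hx⟩⟩
  obtain ⟨m, hm0, hm⟩ := hQ.nontrivial_iff_card.mp hnt
  have hdvd : p ∣ Nat.card (G ⧸ M) := by
    rw [hm]; exact dvd_pow_self p hm0.ne'
  obtain ⟨g, hg⟩ := exists_prime_orderOf_dvd_card' p hdvd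
  -- the subgroup generated by g corresponds to a subgroup strictly above M
  have hgne : g ≠ 1 := by
    intro h; rw [h, orderOf_one] at hg; exact hp.out.one_lt.ne' hg.symm
  obtain ⟨x, hx⟩ := QuotientGroup.mk'_surjective M g
  have hlt : M < Subgroup.comap (QuotientGroup.mk' M) (Subgroup.zpowers g) := by
    refine lt_of_le_of_ne ?_ ?_
    · simpa using Subgroup.ker_le_comap (f := QuotientGroup.mk' M) (Subgroup.zpowers g)
    · intro hcon
      have : x ∈ Subgroup.comap (QuotientGroup.mk' M) (Subgroup.zpowers g) := by
        simp [hx, Subgroup.mem_zpowers]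
      rw [← hcon] at this
      have h1 : (x : G ⧸ M) = 1 := (QuotientGroup.eq_one_iff x).mpr this
      have hx' : (x : G ⧸ M) = g := hx
      rw [hx'] at h1; exact hgne h1
  have htop := hM.2 _ hlt
  have : Subgroup.zpowers g = ⊤ := by
    have := congrArg (Subgroup.map (QuotientGroup.mk' M)) htop
    rwa [Subgroup.map_comap_eq_self_of_surjective (QuotientGroup.mk'_surjective M),
      Subgroup.map_top_of_surjective _ (QuotientGroup.mk'_surjective M)] at this
  rw [← Subgroup.card_top (G := G ⧸ M), ← this, Nat.card_zpowers, hg]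

private lemma mem_frattini_of_forall {G : Type*} [Group G] {x : G}
    (h : ∀ M : Subgroup G, IsCoatom M → x ∈ M) : x ∈ frattini G := by
  simp only [frattini, Order.radical, Subgroup.mem_iInf]
  exact fun M hM => h M hM

private lemma pow_mem_frattini {p : ℕ} {G : Type*} [Group G] [Finite G] [hp : Fact p.Prime]
    (hG : IsPGroup p G) (x : G) : x ^ p ∈ frattini G := by
  refine mem_frattini_of_forall fun M hM => ?_
  obtain ⟨hnorm, hcard⟩ := coatom_card_quot hG hM
  have : ((x : G ⧸ M)) ^ p = 1 := by rw [← hcard]; exact pow_card_eq_one'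
  rw [← QuotientGroup.eq_one_iff]
  simpa using this

private lemma commutator_mem_frattini {p : ℕ} {G : Type*} [Group G] [Finite G] [hp : Fact p.Prime]
    (hG : IsPGroup p G) (x y : G) : (y * x)⁻¹ * (x * y) ∈ frattini G := by
  refine mem_frattini_of_forall fun M hM => ?_
  obtain ⟨hnorm, hcard⟩ := coatom_card_quot hG hM
  have hcyc : IsCyclic (G ⧸ M) := isCyclic_of_prime_card hcard
  letI := hcyc.commGroup
  rw [← QuotientGroup.eq_one_iff]
  have h2 : ((y * x : G) : G ⧸ M) = ((x * y : G) : G ⧸ M) := by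
    rw [QuotientGroup.mk_mul, QuotientGroup.mk_mul]
    exact mul_comm _ _
  show (((y * x)⁻¹ * (x * y) : G) : G ⧸ M) = 1
  rw [QuotientGroup.mk_mul, QuotientGroup.mk_inv, h2]
  group

private lemma card_sq_and_surj {p : ℕ} [hfp : Fact p.Prime] {V : Type*} [Group V] [Finite V]
    (hcomm : ∀ u v : V, u * v = v * u) (hpow : ∀ v : V, v ^ p = 1)
    {a b : V} (hgen : Subgroup.closure {a, b} = ⊤) (hnc : ¬ IsCyclic V) :
    Nat.card V = p ^ 2 ∧ ∃ g : ZMod p × ZMod p →+ Additive V, Function.Surjective ⇑g := by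
  have hp := hfp.out
  letI instV : CommGroup V := { (inferInstance : Group V) with mul_comm := hcomm }
  have hlift : ∀ v : V, (zmultiplesHom (Additive V) (Additive.ofMul v)) ((p : ℤ)) = 0 := by
    intro v
    rw [zmultiplesHom_apply, ← ofMul_zpow, zpow_natCast, hpow]
    rfl
  set g₁ : ZMod p →+ Additive V :=
    ZMod.lift p ⟨zmultiplesHom _ (Additive.ofMul a), hlift _⟩ with hg₁
  set g₂ : ZMod p →+ Additive V :=
    ZMod.lift p ⟨zmultiplesHom _ (Additive.ofMul b), hlift _⟩ with hg₂
  set g : ZMod p × ZMod p →+ Additive V :=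
    g₁.comp (AddMonoidHom.fst _ _) + g₂.comp (AddMonoidHom.snd _ _) with hgdef
  have hgapp : ∀ z : ZMod p × ZMod p, g z = g₁ z.1 + g₂ z.2 := fun z => rfl
  have hg1a : g₁ 1 = Additive.ofMul a := by
    rw [hg₁, show (1 : ZMod p) = ((1 : ℤ) : ZMod p) by norm_cast, ZMod.lift_coe]
    simp [zmultiplesHom_apply]
  have hg2b : g₂ 1 = Additive.ofMul b := by
    rw [hg₂, show (1 : ZMod p) = ((1 : ℤ) : ZMod p) by norm_cast, ZMod.lift_coe]
    simp [zmultiplesHom_apply]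
  have hgsurj : Function.Surjective ⇑g := by
    intro w
    have hw : w.toMul ∈ Subgroup.closure {a, b} := by
      rw [hgen]; exact Subgroup.mem_top _
    have key : ∀ v : V, v ∈ Subgroup.closure {a, b} → ∃ z, g z = Additive.ofMul v := by
      intro v hv
      induction hv using Subgroup.closure_induction with
      | mem v hv =>
        rcases hv with rfl | rfl
        · exact ⟨(1, 0), by rw [hgapp]; simp [hg1a]⟩
        · exact ⟨(0, 1), by rw [hgapp]; simp [hg2b]⟩
      | one => exact ⟨0, by simp⟩
      | mul u v hu hv ihu ihv =>
        obtain ⟨zu, hzu⟩ := ihu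
        obtain ⟨zv, hzv⟩ := ihv
        exact ⟨zu + zv, by rw [map_add, hzu, hzv]; rfl⟩
      | inv u hu ihu =>
        obtain ⟨zu, hzu⟩ := ihu
        exact ⟨-zu, by rw [map_neg, hzu]; rfl⟩
    obtain ⟨z, hz⟩ := key w.toMul hw
    exact ⟨z, hz⟩
  refine ⟨?_, g, hgsurj⟩
  have hVle : Nat.card V ≤ p ^ 2 := by
    have h1 := Nat.card_le_card_of_surjective g hgsurj
    have h2 : Nat.card (ZMod p × ZMod p) = p ^ 2 := by
      rw [Nat.card_prod, Nat.card_zmod, sq]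
    have h3 : Nat.card (Additive V) = Nat.card V := Nat.card_congr Additive.toMul
    omega
  have hpg : IsPGroup p V := fun v => ⟨1, by rw [pow_one, hpow]⟩
  obtain ⟨k, hk⟩ := IsPGroup.iff_card.mp hpg
  have hk2 : k ≤ 2 := by
    rw [hk] at hVle
    exact (Nat.pow_le_pow_iff_right hp.one_lt).mp hVle
  interval_cases k
  · exfalso
    apply hnc
    haveI : Subsingleton V := (Nat.card_eq_one_iff_unique.mp (by simpa using hk)).1
    exact isCyclic_of_subsingleton
  · exact absurd (isCyclic_of_prime_card (p := p) (by rw [hk, pow_one])) hnc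
  · exact hk

theorem stmt_9 (p n : ℕ) (hp : p.Prime) (P : Type*) [Group P] [Finite P]
    (hP : IsPGroup p P) (hcard : Nat.card P = p ^ n)
    (h2gen : ∃ a b : P, Subgroup.closure {a, b} = ⊤) (hnc : ¬ IsCyclic P) :
    Nat.card (deltaGraph P).ConnectedComponent = p + 1 ∧
      (∀ c : (deltaGraph P).ConnectedComponent,
        {v | (deltaGraph P).connectedComponentMk v = c}.ncard = p ^ (n - 2) * (p - 1) ∧
        ∀ v w, (deltaGraph P).connectedComponentMk v = c →
          (deltaGraph P).connectedComponentMk w = c → v ≠ w → (deltaGraph P).Adj v w) ∧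
      ((∃ v, ∀ w, ¬ (deltaGraph P).Adj v w) ↔
        Nonempty (P ≃* Multiplicative (ZMod 2) × Multiplicative (ZMod 2))) := by
  classical
  haveI hfp : Fact p.Prime := ⟨hp⟩
  obtain ⟨a, b, hab⟩ := h2gen
  -- commutativity modulo the Frattini subgroup
  have hcommV : ∀ u v : P ⧸ frattini P, u * v = v * u := by
    intro u v
    obtain ⟨x, rfl⟩ := QuotientGroup.mk_surjective u
    obtain ⟨y, rfl⟩ := QuotientGroup.mk_surjective v
    rw [← QuotientGroup.mk_mul, ← QuotientGroup.mk_mul, QuotientGroup.eq]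
    exact commutator_mem_frattini hP y x
  have hVpow : ∀ v : P ⧸ frattini P, v ^ p = 1 := by
    intro v
    obtain ⟨x, rfl⟩ := QuotientGroup.mk_surjective v
    rw [← QuotientGroup.mk_pow, QuotientGroup.eq_one_iff]
    exact pow_mem_frattini hP x
  have hmemΦ : ∀ x : P, x ∉ frattini P ↔ ((x : P ⧸ frattini P) ≠ 1) := by
    intro x
    rw [Ne, QuotientGroup.eq_one_iff]
  -- generation of the quotient
  have hVgen : Subgroup.closure {((a : P ⧸ frattini P)), ((b : P ⧸ frattini P))} = ⊤ := by
    have := congrArg (Subgroup.map (QuotientGroup.mk' (frattini P))) hab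
    rwa [MonoidHom.map_closure, Subgroup.map_top_of_surjective _ (QuotientGroup.mk'_surjective _),
      Set.image_pair] at this
  -- a surjective hom from (ZMod p)²
  have hVnc : ¬ IsCyclic (P ⧸ frattini P) := by
    intro hcyc
    obtain ⟨g0, hg0⟩ := hcyc.exists_generator
    obtain ⟨x, rfl⟩ := QuotientGroup.mk_surjective g0
    have hmap : Subgroup.map (QuotientGroup.mk' (frattini P)) (Subgroup.zpowers x) = ⊤ := by
      rw [MonoidHom.map_zpowers]
      exact top_unique fun v _ => hg0 v
    have hsup : Subgroup.zpowers x ⊔ frattini P = ⊤ := by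
      have h4 := congrArg (Subgroup.comap (QuotientGroup.mk' (frattini P))) hmap
      rwa [Subgroup.comap_map_eq, QuotientGroup.ker_mk', Subgroup.comap_top] at h4
    have htop : Subgroup.zpowers x = ⊤ := frattini_nongenerating hsup
    exact hnc ⟨⟨x, fun y => Subgroup.mem_zpowers_iff.mp (by rw [htop]; exact Subgroup.mem_top y)⟩⟩
  obtain ⟨hVcard, g, hgsurj⟩ :=
    card_sq_and_surj hcommV hVpow hVgen hVnc
  have hn2 : 2 ≤ n := by
    have hdvd : (frattini P).index ∣ Nat.card P := Subgroup.index_dvd_card _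
    rw [Subgroup.index_eq_card, hVcard, hcard] at hdvd
    have := Nat.le_of_dvd (pow_pos hp.pos n) hdvd
    exact (Nat.pow_le_pow_iff_right hp.one_lt).mp this
  have hΦcard : Nat.card (frattini P) = p ^ (n - 2) := by
    have h5 := Subgroup.index_mul_card (frattini P)
    rw [Subgroup.index_eq_card, hVcard, hcard] at h5
    have h6 : p ^ n = p ^ 2 * p ^ (n - 2) := by
      rw [← pow_add]
      congr 1
      omega
    rw [h6] at h5
    exact Nat.eq_of_mul_eq_mul_left (pow_pos hp.pos 2) h5
  -- facts about the quotient
  have horder : ∀ v : P ⧸ frattini P, v ≠ 1 → Nat.card (Subgroup.zpowers v) = p := by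
    intro v hv
    rw [Nat.card_zpowers]
    rcases (Nat.Prime.eq_one_or_self_of_dvd hp _
      (orderOf_dvd_of_pow_eq_one (hVpow v))) with h | h
    · exact absurd (orderOf_eq_one_iff.mp h) hv
    · exact h
  have hzp_eq : ∀ v w : P ⧸ frattini P, w ≠ 1 → w ∈ Subgroup.zpowers v →
      Subgroup.zpowers w = Subgroup.zpowers v := by
    intro v w hw hmem
    have hv : v ≠ 1 := by
      rintro rfl
      rw [Subgroup.zpowers_one_eq_bot] at hmem
      exact hw (Subgroup.mem_bot.mp hmem)
    exact subgroup_eq_of_le_of_card_le (Subgroup.zpowers_le.mpr hmem)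
      (le_of_eq ((horder v hv).trans (horder w hw).symm))
  have hkey : ∀ v w : P ⧸ frattini P, v ≠ 1 → w ≠ 1 →
      (Subgroup.closure {v, w} = ⊤ ↔ Subgroup.zpowers v ≠ Subgroup.zpowers w) := by
    intro v w hv hw
    constructor
    · intro htop heq
      have hle : Subgroup.closure {v, w} ≤ Subgroup.zpowers v := by
        rw [Subgroup.closure_le]
        rintro z (rfl | rfl)
        · exact Subgroup.mem_zpowers _
        · rw [SetLike.mem_coe, heq]; exact Subgroup.mem_zpowers _
      rw [htop, top_le_iff] at hle
      have := horder v hv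
      rw [hle, Subgroup.card_top, hVcard] at this
      nlinarith [hp.two_le]
    · intro hne
      have hvmem : v ∈ Subgroup.closure {v, w} :=
        Subgroup.subset_closure (Set.mem_insert _ _)
      have hwmem : w ∈ Subgroup.closure {v, w} :=
        Subgroup.subset_closure (Set.mem_insert_of_mem _ rfl)
      have hdvd : Nat.card (Subgroup.closure {v, w}) ∣ p ^ 2 := by
        rw [← hVcard]; exact Subgroup.card_subgroup_dvd_card _
      obtain ⟨j, hj2, hj⟩ := (Nat.dvd_prime_pow hp).mp hdvd
      interval_cases j
      · exfalso
        rw [pow_zero, Subgroup.card_eq_one] at hj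
        rw [hj] at hvmem
        exact hv (Subgroup.mem_bot.mp hvmem)
      · exfalso
        rw [pow_one] at hj
        have hle : Subgroup.zpowers v ≤ Subgroup.closure {v, w} :=
          Subgroup.zpowers_le.mpr hvmem
        have heq := subgroup_eq_of_le_of_card_le hle
          (le_of_eq (hj.trans (horder v hv).symm))
        rw [← heq] at hwmem
        exact hne (hzp_eq v w hw hwmem).symm
      · exact Subgroup.eq_top_of_card_eq _ (by rw [hj, hVcard])
  -- bridging generation between P and the quotient
  have htopiff : ∀ x y : P, Subgroup.closure {x, y} = ⊤ ↔
      Subgroup.closure {((x : P ⧸ frattini P)), ((y : P ⧸ frattini P))} = ⊤ := by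
    intro x y
    constructor
    · intro h
      have := congrArg (Subgroup.map (QuotientGroup.mk' (frattini P))) h
      rwa [MonoidHom.map_closure, Subgroup.map_top_of_surjective _
        (QuotientGroup.mk'_surjective _), Set.image_pair] at this
    · intro h
      have h7 : Subgroup.map (QuotientGroup.mk' (frattini P)) (Subgroup.closure {x, y}) = ⊤ := by
        rw [MonoidHom.map_closure, Set.image_pair]
        exact h
      have h8 := congrArg (Subgroup.comap (QuotientGroup.mk' (frattini P))) h7
      rw [Subgroup.comap_map_eq, QuotientGroup.ker_mk', Subgroup.comap_top] at h8
      exact frattini_nongenerating h8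
  -- the component invariant
  set inv : {x : P // x ∉ frattini P} → Subgroup (P ⧸ frattini P) :=
    fun x => Subgroup.zpowers ((x.1 : P ⧸ frattini P)) with hinv
  have hadj : ∀ x y : {x : P // x ∉ frattini P},
      (deltaGraph P).Adj x y ↔ x ≠ y ∧ inv x = inv y := by
    intro x y
    show (x ≠ y ∧ Subgroup.closure {x.1, y.1} ≠ ⊤) ↔ _
    refine and_congr_right fun _ => ?_
    have h9 := htopiff x.1 y.1
    have h10 := hkey _ _ ((hmemΦ x.1).mp x.2) ((hmemΦ y.1).mp y.2)
    constructor
    · intro h2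
      by_contra hne
      exact h2 (h9.mpr (h10.mpr hne))
    · intro heq h2
      exact h10.mp (h9.mp h2) heq
  have hwalk : ∀ (u w : {x : P // x ∉ frattini P}) (pth : (deltaGraph P).Walk u w),
      inv u = inv w := by
    intro u w pth
    induction pth with
    | nil => rfl
    | cons h pth ih => exact ((hadj _ _).mp h).2.trans ih
  have hcomp : ∀ u w : {x : P // x ∉ frattini P},
      (deltaGraph P).connectedComponentMk u = (deltaGraph P).connectedComponentMk w ↔
        inv u = inv w := by
    intro u w
    constructor
    · intro h
      obtain ⟨pth⟩ := SimpleGraph.ConnectedComponent.exact h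
      exact hwalk _ _ pth
    · intro h
      rcases eq_or_ne u w with rfl | hne
      · rfl
      · exact SimpleGraph.ConnectedComponent.connectedComponentMk_eq_of_adj
          ((hadj u w).mpr ⟨hne, h⟩)
  -- fiber cardinality
  have hfib : ∀ u : {x : P // x ∉ frattini P},
      {v | (deltaGraph P).connectedComponentMk v = (deltaGraph P).connectedComponentMk u}.ncard
        = p ^ (n - 2) * (p - 1) := by
    intro u
    have hu1 : ((u.1 : P ⧸ frattini P)) ≠ 1 := (hmemΦ u.1).mp u.2
    have hLcard : Nat.card (inv u) = p := by
      simp only [hinv]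
      exact horder _ hu1
    have hone_card : ∀ v : P ⧸ frattini P, Subgroup.zpowers v = inv u → v ≠ 1 := by
      intro v hvL h1
      rw [h1] at hvL
      have : (1 : ℕ) = p := by
        rw [← hLcard, ← hvL, Nat.card_zpowers, orderOf_one]
      exact hp.one_lt.ne this
    have hgenset : {v : P ⧸ frattini P | Subgroup.zpowers v = inv u}
        = (inv u : Set (P ⧸ frattini P)) \ {1} := by
      ext v
      simp only [Set.mem_setOf_eq, Set.mem_diff, SetLike.mem_coe, Set.mem_singleton_iff]
      constructor
      · intro hvL
        refine ⟨by rw [← hvL]; exact Subgroup.mem_zpowers v, hone_card v hvL⟩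
      · rintro ⟨hmem, hv1⟩
        simp only [hinv] at hmem ⊢
        exact hzp_eq _ v hv1 hmem
    have hTcard : {v : P ⧸ frattini P | Subgroup.zpowers v = inv u}.ncard = p - 1 := by
      have hIc : (inv u : Set (P ⧸ frattini P)).ncard = p := by
        rw [← Nat.card_coe_set_eq, SetLike.coe_sort_coe]
        exact hLcard
      rw [hgenset, Set.ncard_diff_singleton_of_mem (by exact Subgroup.one_mem _), hIc]
    have hset : Subtype.val '' {v : {x : P // x ∉ frattini P} |
        (deltaGraph P).connectedComponentMk v = (deltaGraph P).connectedComponentMk u}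
        = QuotientGroup.mk ⁻¹' {v : P ⧸ frattini P | Subgroup.zpowers v = inv u} := by
      ext x
      constructor
      · rintro ⟨v, hv, rfl⟩
        have h20 := (hcomp v u).mp hv
        simp only [hinv] at h20
        exact h20
      · intro hx
        have hx' : Subgroup.zpowers ((x : P ⧸ frattini P)) = inv u := hx
        have hx1 : ((x : P ⧸ frattini P)) ≠ 1 := hone_card _ hx'
        refine ⟨⟨x, (hmemΦ x).mpr hx1⟩, ?_, rfl⟩
        refine (hcomp _ u).mpr ?_
        simp only [hinv]
        exact hx'
    have h11 : {v | (deltaGraph P).connectedComponentMk v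
          = (deltaGraph P).connectedComponentMk u}.ncard
        = (QuotientGroup.mk ⁻¹' {v : P ⧸ frattini P | Subgroup.zpowers v = inv u}).ncard := by
      rw [← hset, Set.ncard_image_of_injective _ Subtype.val_injective]
    rw [h11]
    have hequiv := QuotientGroup.preimageMkEquivSubgroupProdSet (frattini P)
      {v : P ⧸ frattini P | Subgroup.zpowers v = inv u}
    rw [← Nat.card_coe_set_eq, Nat.card_congr hequiv, Nat.card_prod,
      Nat.card_coe_set_eq, hTcard, hΦcard]
  -- counting components
  haveI finV : Fintype {x : P // x ∉ frattini P} := Fintype.ofFinite _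
  haveI finC : Fintype (deltaGraph P).ConnectedComponent := Fintype.ofFinite _
  have htotal : Fintype.card {x : P // x ∉ frattini P} = p ^ (n - 2) * (p ^ 2 - 1) := by
    haveI : Fintype P := Fintype.ofFinite _
    rw [Fintype.card_subtype_compl]
    have e1 : Fintype.card P = p ^ n := by rw [← Nat.card_eq_fintype_card, hcard]
    have e2 : Fintype.card {x : P // x ∈ frattini P} = p ^ (n - 2) := by
      rw [← Nat.card_eq_fintype_card]
      exact hΦcard
    rw [e1, e2]
    have e3 : p ^ n = p ^ (n - 2) * p ^ 2 := by
      rw [← pow_add]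
      congr 1
      omega
    rw [e3, Nat.mul_sub, mul_one]
  have hfilter : ∀ c : (deltaGraph P).ConnectedComponent,
      (Finset.univ.filter
        (fun v => (deltaGraph P).connectedComponentMk v = c)).card = p ^ (n - 2) * (p - 1) := by
    intro c
    obtain ⟨u, rfl⟩ := c.exists_rep
    rw [← hfib u, Set.ncard_eq_toFinset_card']
    congr 1
    ext v
    simp only [Set.mem_toFinset, Set.mem_setOf_eq, Finset.mem_filter, Finset.mem_univ, true_and]
    exact Iff.rfl
  have hsum : Fintype.card {x : P // x ∉ frattini P}
      = ∑ _c : (deltaGraph P).ConnectedComponent, p ^ (n - 2) * (p - 1) := by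
    rw [← Finset.card_univ,
      Finset.card_eq_sum_card_fiberwise
        (f := fun v => (deltaGraph P).connectedComponentMk v)
        (t := Finset.univ) (fun v _ => Finset.mem_univ _)]
    exact Finset.sum_congr rfl fun c _ => hfilter c
  have hcount : Fintype.card (deltaGraph P).ConnectedComponent = p + 1 := by
    rw [Finset.sum_const, smul_eq_mul, Finset.card_univ, htotal] at hsum
    have hfac : p ^ (n - 2) * (p ^ 2 - 1)
        = (p + 1) * (p ^ (n - 2) * (p - 1)) := by
      have h14 : p ^ 2 - 1 = (p + 1) * (p - 1) := by
        have := Nat.sq_sub_sq p 1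
        simpa using this
      rw [h14]
      ring
    rw [hfac] at hsum
    have hpos : 0 < p ^ (n - 2) * (p - 1) :=
      Nat.mul_pos (pow_pos hp.pos _) (by have := hp.two_le; omega)
    exact (Nat.eq_of_mul_eq_mul_right hpos hsum).symm
  refine ⟨by rw [Nat.card_eq_fintype_card]; exact hcount, ?_, ?_⟩
  · intro c
    obtain ⟨u, rfl⟩ := c.exists_rep
    refine ⟨hfib u, ?_⟩
    intro v w hv hw hne
    exact (hadj v w).mpr ⟨hne, ((hcomp v u).mp hv).trans ((hcomp w u).mp hw).symm⟩
  · constructor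
    · rintro ⟨v, hv⟩
      have hone : {w | (deltaGraph P).connectedComponentMk w
            = (deltaGraph P).connectedComponentMk v} = {v} := by
        ext w
        simp only [Set.mem_setOf_eq, Set.mem_singleton_iff]
        constructor
        · intro hw
          by_contra hne
          exact hv w ((hadj v w).mpr ⟨fun h => hne h.symm, ((hcomp w v).mp hw).symm⟩)
        · rintro rfl; rfl
      have hs1 : p ^ (n - 2) * (p - 1) = 1 := by
        rw [← hfib v, hone, Set.ncard_singleton]
      have hA : p ^ (n - 2) = 1 := Nat.dvd_one.mp ⟨p - 1, hs1.symm⟩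
      have hB : p - 1 = 1 := Nat.dvd_one.mp ⟨p ^ (n - 2), by rw [mul_comm]; exact hs1.symm⟩
      have hpe : p = 2 := by have := hp.two_le; omega
      have hne2 : n = 2 := by
        by_contra h
        have h3 : n - 2 ≠ 0 := by omega
        have h4 : 1 < p ^ (n - 2) := Nat.one_lt_pow h3 hp.one_lt
        omega
      subst hpe
      subst hne2
      have hΦbot : frattini P = ⊥ := Subgroup.card_eq_one.mp (by simpa using hΦcard)
      have hbij : Function.Bijective ⇑g := by
        haveI : Fintype (Additive (P ⧸ frattini P)) := Fintype.ofFinite _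
        refine (Fintype.bijective_iff_surjective_and_card _).mpr ⟨hgsurj, ?_⟩
        have c1 : Fintype.card (ZMod 2 × ZMod 2) = 4 := by
          simp
        have c2 : Fintype.card (Additive (P ⧸ frattini P)) = 4 := by
          rw [← Nat.card_eq_fintype_card]
          have : Nat.card (Additive (P ⧸ frattini P)) = Nat.card (P ⧸ frattini P) :=
            Nat.card_congr Additive.toMul
          rw [this, hVcard]
          norm_num
        omega
      refine ⟨?_⟩
      have e1 : (ZMod 2 × ZMod 2) ≃+ Additive (P ⧸ frattini P) := AddEquiv.ofBijective g hbij
      have e2 : (P ⧸ frattini P) ≃* P :=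
        (QuotientGroup.quotientMulEquivOfEq hΦbot).trans (QuotientGroup.quotientBot (G := P))
      exact e2.symm.trans ((MulEquiv.multiplicativeAdditive (P ⧸ frattini P)).symm.trans
        ((AddEquiv.toMultiplicative e1).symm.trans (MulEquiv.prodMultiplicative (ZMod 2) (ZMod 2))))
    · rintro ⟨e⟩
      have hcard4 : Nat.card P = 4 := by
        rw [Nat.card_congr e.toEquiv, Nat.card_prod]
        have c1 : Nat.card (Multiplicative (ZMod 2)) = 2 := by
          rw [Nat.card_congr Multiplicative.toAdd, Nat.card_zmod]
        rw [c1]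
      rw [hcard] at hcard4
      have hn1 : 1 ≤ n := by omega
      have hpdvd : p ∣ 4 := hcard4 ▸ dvd_pow_self p (by omega)
      have hpe : p = 2 := by
        have h21 : p ∣ 2 ^ 2 := by norm_num at hpdvd ⊢; exact hpdvd
        have h22 : p ∣ 2 := hp.dvd_of_dvd_pow h21
        exact (Nat.prime_dvd_prime_iff_eq hp Nat.prime_two).mp h22
      subst hpe
      have hne2 : n = 2 := by
        have : (2 : ℕ) ^ n = 2 ^ 2 := by omega
        exact Nat.pow_right_injective le_rfl this
      subst hne2
      haveI : Nonempty {x : P // x ∉ frattini P} := by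
        rw [← Fintype.card_pos_iff, htotal]
        norm_num
      obtain ⟨v⟩ := this
      refine ⟨v, fun w hw => ?_⟩
      have hsame := SimpleGraph.ConnectedComponent.connectedComponentMk_eq_of_adj hw
      have h17 : {w' | (deltaGraph P).connectedComponentMk w'
          = (deltaGraph P).connectedComponentMk v}.ncard = 1 := by
        rw [hfib v]
        norm_num
      obtain ⟨u0, hu0⟩ := Set.ncard_eq_one.mp h17
      have hv0 : v ∈ {w' | (deltaGraph P).connectedComponentMk w'
          = (deltaGraph P).connectedComponentMk v} := rfl
      have hw0 : w ∈ {w' | (deltaGraph P).connectedComponentMk w'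
          = (deltaGraph P).connectedComponentMk v} := hsame.symm
      rw [hu0, Set.mem_singleton_iff] at hv0 hw0
      exact hw.ne (hv0.trans hw0.symm)
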